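/- Let (C, d) be a chain complex over 𝔽₂ with a distinguished basis G, and write c_{xy} for the coefficient of y in d(x). Suppose x, y ∈ G are distinct basis elements with c_{xy} = 1. Define a differential d' on the free 𝔽₂-module generated by G' = G \ {x,y} by setting the coefficient of c in d'(a) to be c_{ac} + c_{ay}·c_{xc}. Then d' ∘ d' = 0. -/
import Mathlib


/-- Cancellation for chain complexes over `𝔽₂`: if `(c_{ab})` are the structure
coefficients of a differential (`d ∘ d = 0` in coefficient form), `x ≠ y`, and
`c_{xy} = 1`, then the cancelled coefficients `c'_{ac} = c_{ac} + c_{ay} c_{xc}`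
on `G' = G \ {x, y}` again satisfy `d' ∘ d' = 0` in coefficient form. -/
theorem cancellation_squares_to_zero {G : Type*} [Fintype G] [DecidableEq G]
    (c : G → G → ZMod 2)
    (hd2 : ∀ a b : G, ∑ e : G, c a e * c e b = 0)
    (x y : G) (hxy : x ≠ y) (hcxy : c x y = 1) :
    ∀ a b : {g : G // g ≠ x ∧ g ≠ y},
      ∑ e : {g : G // g ≠ x ∧ g ≠ y},
        (c ↑a ↑e + c ↑a y * c x ↑e) * (c ↑e ↑b + c ↑e y * c x ↑b) = 0 := by
  intro a b
  set F : G → ZMod 2 :=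
    fun e => (c ↑a e + c ↑a y * c x e) * (c e ↑b + c e y * c x ↑b) with hF
  -- sum over the subtype equals sum over univ \ {x, y}
  have hsub : ∑ e : {g : G // g ≠ x ∧ g ≠ y}, F ↑e
      = ∑ e ∈ Finset.univ \ ({x, y} : Finset G), F e := by
    exact (Finset.sum_subtype _ (fun g => by simp [not_or]) F).symm
  -- F x = 0 and F y = 0
  have hFx : F x = 0 := by
    have h2 : (2 : ZMod 2) = 0 := by decide
    simp only [hF, hcxy]
    ring_nf
    simp [h2]
  have hFy : F y = 0 := by
    have h2 : (2 : ZMod 2) = 0 := by decide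
    simp only [hF, hcxy]
    ring_nf
    simp [h2]
  -- total sum over G is 0
  have htot : ∑ e : G, F e = 0 := by
    have key : ∀ e : G, F e =
        c ↑a e * c e ↑b + (c ↑a e * c e y) * c x ↑b
          + c ↑a y * (c x e * c e ↑b) + (c ↑a y * c x ↑b) * (c x e * c e y) := by
      intro e; simp only [hF]; ring
    calc ∑ e : G, F e
        = (∑ e : G, c ↑a e * c e ↑b) + (∑ e : G, c ↑a e * c e y) * c x ↑b
          + c ↑a y * (∑ e : G, c x e * c e ↑b)
          + (c ↑a y * c x ↑b) * (∑ e : G, c x e * c e y) := by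
          simp only [key, Finset.sum_add_distrib, Finset.sum_mul, Finset.mul_sum]
      _ = 0 := by rw [hd2, hd2, hd2, hd2]; ring
  rw [hsub, Finset.sum_sdiff_eq_sub (Finset.subset_univ _), htot,
    Finset.sum_pair hxy, hFx, hFy]
  ring
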